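/- If Y is a total and inhabited presheaf over the category of clock worlds, then for any clock κ and monotone predicate φ on Y: if a world forces ▷κ(∃ y : Y, φ(y)), then it forces ∃ y : Y, ▷κ φ(y). -/

import Mathlib

/-- A world of the base category `CLK`: a non-empty finite set of clock names
(represented as `Fin n` with `0 < n`) together with a time assignment. -/
structure World where
  n : ℕ
  pos : 0 < n
  time : Fin n → ℕ

/-- A morphism of worlds `ρ : V ⟶ U`; its action `map` on clock names is the
contravariant action `ρ* : 𝒩(U) → 𝒩(V)`, subject to `∂_V(ρ*κ) ≤ ∂_U(κ)`. -/
structure WHom (V U : World) where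
  map : Fin U.n → Fin V.n
  le : ∀ κ, V.time (map κ) ≤ U.time κ

/-- The world `𝐔[κ ↦ m]`, replacing the time assigned to `κ` by `m`. -/
def World.set (U : World) (κ : Fin U.n) (m : ℕ) : World :=
  ⟨U.n, U.pos, Function.update U.time κ m⟩

/-- Presheaf propositions on worlds. -/
def Pred := World → Prop

/-- A predicate is monotone (a presheaf proposition) when it restricts along
world morphisms. -/
def Pred.Mono (φ : Pred) : Prop := ∀ {V U : World}, WHom V U → φ U → φ V

/-- Forcing clause for the later modality `𝐔 ⊩ ▷κ φ`: trivially true when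
`∂_U(κ) = 0`, and `𝐔[κ ↦ m] ⊩ φ` when `∂_U(κ) = m + 1`. -/
def Later (φ : Pred) (U : World) (κ : Fin U.n) : Prop :=
  ∀ m, U.time κ = m + 1 → φ (U.set κ m)


/-- A presheaf of sets over the category of clock worlds. -/
structure Psh where
  obj : World → Type
  map : ∀ {V U : World}, WHom V U → obj U → obj V

/-- The increment morphism `[κ+=1] : 𝐔[κ↦m] → 𝐔`, when `∂_U(κ) = m + 1`. -/
def incHom (U : World) (κ : Fin U.n) (m : ℕ) (h : U.time κ = m + 1) :
    WHom (U.set κ m) U where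
  map := fun κ' => κ'
  le := by
    intro κ'
    by_cases hk : κ' = κ
    · subst hk; simp [World.set, h]
    · simp [World.set, Function.update_of_ne hk]

/-- if `Y` is a total and inhabited presheaf, then forcing of
`▷κ(∃ y : Y, φ(y))` entails forcing of `∃ y : Y, ▷κ φ(y)`. -/
theorem total_yank_existential (Y : Psh)
    (htotal : ∀ (U : World) (κ : Fin U.n) (m : ℕ) (h : U.time κ = m + 1),
      Function.Surjective (Y.map (incHom U κ m h)))
    (hinh : ∀ U : World, Nonempty (Y.obj U))
    (φ : ∀ W : World, Y.obj W → Prop)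
    (hφ : ∀ {V U : World} (ρ : WHom V U) (y : Y.obj U), φ U y → φ V (Y.map ρ y))
    (U : World) (κ : Fin U.n)
    (h : ∀ m (_ : U.time κ = m + 1), ∃ y : Y.obj (U.set κ m), φ (U.set κ m) y) :
    ∃ y : Y.obj U, ∀ m (hm : U.time κ = m + 1),
      φ (U.set κ m) (Y.map (incHom U κ m hm) y) := by
  by_cases hz : U.time κ = 0
  · exact ⟨(hinh U).some, fun m hm => by omega⟩
  · obtain ⟨m, hk⟩ := Nat.exists_eq_succ_of_ne_zero hz
    obtain ⟨y', hy'⟩ := h m hk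
    obtain ⟨y, hy⟩ := htotal U κ m hk y'
    refine ⟨y, fun m' hm' => ?_⟩
    obtain rfl : m' = m := by omega
    rw [hy]; exact hy'
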